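/- For the Type II outlier-corrupted affinity matrix W̃ and each j = 1, …, K, the value (N_j w_j + w̃_j)/d̃_j is a generalized eigenvalue of the pair (L̃, D̃) with geometric multiplicity at least N_j − 1; that is, the kernel of L̃ − ((N_j w_j + w̃_j)/d̃_j) D̃ has dimension at least N_j − 1. -/

import Mathlib

/-- For the Type II outlier-corrupted affinity matrix `W̃` and each block `j`,
the value `(n j * w j + w̃ j) / d̃ j` is a generalized eigenvalue of the pair `(L̃, D̃)` with
geometric multiplicity at least `n j - 1`; that is, the kernel of
`L̃ - ((n j * w j + w̃ j) / d̃ j) • D̃` has dimension at least `n j - 1`. -/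
theorem typeII_generalized_eigenvalue_multiplicity
    (K : ℕ) (hK : 1 ≤ K)
    (n : Fin K → ℕ) (hn : ∀ i, 2 ≤ n i)
    (w : Fin K → ℝ) (hw : ∀ i, 0 < w i)
    (N : ℕ) (hN : N = ∑ i, n i)
    (β : Fin N → Fin K)
    (hβ : ∀ m : Fin N,
      (∑ k ∈ Finset.univ.filter (fun k => k < β m), n k) ≤ m.val ∧
      m.val < (∑ k ∈ Finset.univ.filter (fun k => k < β m), n k) + n (β m))
    (W : Matrix (Fin N) (Fin N) ℝ)
    (hW : ∀ m p, W m p = if m ≠ p ∧ β m = β p then w (β m) else 0)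
    (wt : Fin K → ℝ) (hwt : ∀ j, 0 < wt j)
    (Wt : Matrix (Fin (N + 1)) (Fin (N + 1)) ℝ)
    (hWt1 : ∀ a b : Fin N, Wt a.castSucc b.castSucc = W a b)
    (hWt2 : ∀ a : Fin N, Wt (Fin.last N) a.castSucc = wt (β a))
    (hWt3 : ∀ a : Fin N, Wt a.castSucc (Fin.last N) = wt (β a))
    (hWt4 : Wt (Fin.last N) (Fin.last N) = 0)
    (Dt : Matrix (Fin (N + 1)) (Fin (N + 1)) ℝ)
    (hDt : Dt = Matrix.diagonal (fun m => ∑ p, Wt m p))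
    (Lt : Matrix (Fin (N + 1)) (Fin (N + 1)) ℝ)
    (hLt : Lt = Dt - Wt)
    (dt : Fin K → ℝ)
    (hdt : ∀ j, dt j = ((n j : ℝ) - 1) * w j + wt j) :
    ∀ j : Fin K,
      n j - 1 ≤
        Module.finrank ℝ
          ↥(LinearMap.ker
            (Matrix.toLin' (Lt - (((n j : ℝ) * w j + wt j) / dt j) • Dt))) := by
  intro j
  classical
  set ℓ : Fin K → ℕ := fun i => ∑ k ∈ Finset.univ.filter (fun k => k < i), n k with hℓ
  -- monotonicity of block starts
  have hA : ∀ i i' : Fin K, i < i' → ℓ i + n i ≤ ℓ i' := by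
    intro i i' hii
    have hsub : insert i (Finset.univ.filter (fun k => k < i)) ⊆
        Finset.univ.filter (fun k => k < i') := by
      intro x hx
      rcases Finset.mem_insert.mp hx with h | h
      · subst h; simp [hii]
      · simp only [Finset.mem_filter, Finset.mem_univ, true_and] at h ⊢
        exact h.trans hii
    have hnot : i ∉ Finset.univ.filter (fun k => k < i) := by simp
    calc ℓ i + n i = ∑ k ∈ insert i (Finset.univ.filter (fun k => k < i)), n k := by
          rw [Finset.sum_insert hnot]; ring
      _ ≤ ℓ i' := Finset.sum_le_sum_of_subset hsub
  have hℓN : ∀ i : Fin K, ℓ i + n i ≤ N := by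
    intro i
    have hnot : i ∉ Finset.univ.filter (fun k => k < i) := by simp
    calc ℓ i + n i = ∑ k ∈ insert i (Finset.univ.filter (fun k => k < i)), n k := by
          rw [Finset.sum_insert hnot]; ring
      _ ≤ ∑ k, n k := Finset.sum_le_sum_of_subset (Finset.subset_univ _)
      _ = N := hN.symm
  -- characterization of blocks
  have hB : ∀ b : Fin N, β b = j ↔ (ℓ j ≤ b.val ∧ b.val < ℓ j + n j) := by
    intro b
    constructor
    · intro h; have := hβ b; rw [h] at this; exact this
    · rintro ⟨h1, h2⟩
      rcases lt_trichotomy (β b) j with h | h | h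
      · exact absurd ((hβ b).2.trans_le ((hA _ _ h).trans h1)) (lt_irrefl _)
      · exact h
      · exact absurd (h2.trans_le ((hA _ _ h).trans (hβ b).1)) (lt_irrefl _)
  -- cardinality of block j
  have hF : (Finset.univ.filter (fun b : Fin N => β b = j)).card = n j := by
    have : (Finset.univ.filter (fun b : Fin N => β b = j)).card
        = (Finset.univ : Finset (Fin (n j))).card := by
      apply Finset.card_bij' (fun b hb => (⟨b.val - ℓ j, by
        have hb' : β b = j := (Finset.mem_filter.mp hb).2
        have h := (hB b).mp hb'
        omega⟩ : Fin (n j))) (fun a _ => (⟨ℓ j + a.val, by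
          have := hℓN j; have := a.isLt; omega⟩ : Fin N))
      · intro a ha
        simp only [Finset.mem_filter, Finset.mem_univ, true_and] at ha
        have h := (hB a).mp ha
        ext; simp; omega
      · intro a ha
        ext; simp
      · intro a ha; simp
      · intro a ha
        simp only [Finset.mem_filter, Finset.mem_univ, true_and]
        exact (hB _).mpr ⟨by simp, by simp [Nat.add_lt_add_left a.isLt]⟩
    simpa using this
  have hdtpos : 0 < dt j := by
    rw [hdt]
    have h1 : (1 : ℝ) ≤ (n j : ℝ) - 1 := by
      have := hn j; have : (2 : ℝ) ≤ (n j : ℝ) := by exact_mod_cast this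
      linarith
    have := hw j; have := hwt j
    nlinarith
  set lam : ℝ := ((n j : ℝ) * w j + wt j) / dt j with hlam
  have hE : (1 - lam) * dt j = -(w j) := by
    have h1 : lam * dt j = (n j : ℝ) * w j + wt j :=
      div_mul_cancel₀ _ (ne_of_gt hdtpos)
    have h2 := hdt j
    nlinarith [h1]
  -- row sums for block-j rows
  have hD : ∀ b : Fin N, β b = j → (∑ p, Wt b.castSucc p) = dt j := by
    intro b hb
    rw [Fin.sum_univ_castSucc]
    have hsum : (∑ a : Fin N, Wt b.castSucc a.castSucc)
        = ((n j : ℝ) - 1) * w j := by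
      have : ∀ a : Fin N, Wt b.castSucc a.castSucc
          = if a ∈ (Finset.univ.filter (fun c : Fin N => β c = j)).erase b
            then w j else 0 := by
        intro a
        rw [hWt1, hW, hb]
        by_cases h1 : a ∈ (Finset.univ.filter (fun c : Fin N => β c = j)).erase b
        · have h2 := Finset.mem_erase.mp h1
          have h3 : β a = j := (Finset.mem_filter.mp h2.2).2
          simp [h2.1, Ne.symm h2.1, h3, hb]
        · have h2 : ¬(b ≠ a ∧ j = β a) := by
            simp only [Finset.mem_erase, Finset.mem_filter, Finset.mem_univ,
              true_and, not_and] at h1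
            rintro ⟨hba, hβa⟩
            exact (h1 (fun h => hba h.symm)) (hb ▸ hβa.symm)
          rw [if_neg h2, if_neg h1]
      rw [Finset.sum_congr rfl (fun a _ => this a), Finset.sum_ite_mem,
        Finset.univ_inter, Finset.sum_const,
        Finset.card_erase_of_mem (by simp [hb]), hF]
      have h2 : (1 : ℕ) ≤ n j := le_trans (by norm_num) (hn j)
      rw [nsmul_eq_mul, Nat.cast_sub h2]
      norm_num
    rw [hsum, hWt3, hb, hdt]
  -- the matrix
  set M : Matrix (Fin (N + 1)) (Fin (N + 1)) ℝ := Lt - lam • Dt with hM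
  have hMcol : ∀ b : Fin N, β b = j → ∀ m,
      M m b.castSucc = if m = b.castSucc then -(w j) else -(Wt m b.castSucc) := by
    intro b hb m
    have hWbb : Wt b.castSucc b.castSucc = 0 := by
      rw [hWt1, hW]; simp
    by_cases h : m = b.castSucc
    · subst h
      rw [if_pos rfl, hM, hLt, hDt]
      simp only [Matrix.sub_apply, Matrix.smul_apply, Matrix.diagonal_apply_eq,
        smul_eq_mul]
      rw [hWbb, hD b hb]
      linear_combination hE
    · rw [hM, hLt, hDt]
      simp only [Matrix.sub_apply, Matrix.smul_apply, smul_eq_mul,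
        Matrix.diagonal_apply_ne _ h]
      rw [if_neg h]; ring
  have hMdiff : ∀ b c : Fin N, β b = j → β c = j → b ≠ c → ∀ m,
      M m b.castSucc = M m c.castSucc := by
    intro b c hb hc hbc m
    rw [hMcol b hb, hMcol c hc]
    by_cases h1 : m = b.castSucc
    · subst h1
      rw [if_pos rfl, if_neg (by simpa using hbc), hWt1, hW]
      rw [if_pos ⟨hbc, hb.trans hc.symm⟩, hb]
    · by_cases h2 : m = c.castSucc
      · subst h2
        rw [if_neg h1, if_pos rfl, hWt1, hW]
        rw [if_pos ⟨Ne.symm hbc, hc.trans hb.symm⟩, hc]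
      · rw [if_neg h1, if_neg h2]
        rcases Fin.eq_castSucc_or_eq_last m with ⟨a, rfl⟩ | rfl
        · have ha1 : a ≠ b := fun h => h1 (by rw [h])
          have ha2 : a ≠ c := fun h => h2 (by rw [h])
          rw [hWt1, hWt1, hW, hW]
          by_cases haj : β a = j
          · rw [if_pos ⟨ha1, haj.trans hb.symm⟩, if_pos ⟨ha2, haj.trans hc.symm⟩]
          · rw [if_neg (fun h => haj (h.2.trans hb)), if_neg (fun h => haj (h.2.trans hc))]
        · rw [hWt2, hWt2, hb, hc]
  -- the vectors
  have hℓj : ℓ j + n j ≤ N := hℓN j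
  have hnj2 : 2 ≤ n j := hn j
  set q : Fin N := ⟨ℓ j, by omega⟩ with hq
  set e : Fin (n j - 1) → Fin N := fun a => ⟨ℓ j + 1 + a.val, by
    have := a.isLt; omega⟩ with he
  have hβq : β q = j := (hB q).mpr ⟨le_refl _, by simp [hq]; omega⟩
  have hβe : ∀ a, β (e a) = j := fun a =>
    (hB (e a)).mpr ⟨by simp [he]; omega, by have := a.isLt; simp [he]; omega⟩
  have heq : ∀ a, e a ≠ q := by
    intro a h
    have := congrArg Fin.val h
    simp only [he, hq] at this
    omega
  have hei : Function.Injective e := by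
    intro a b h
    have := congrArg Fin.val h
    simp only [he] at this
    exact Fin.ext (by omega)
  set v : Fin (n j - 1) → (Fin (N + 1) → ℝ) := fun a =>
    Pi.single ((e a).castSucc) 1 - Pi.single (q.castSucc) 1 with hv
  -- kernel membership
  have hmem : ∀ a, v a ∈ LinearMap.ker (Matrix.toLin' M) := by
    intro a
    rw [LinearMap.mem_ker, Matrix.toLin'_apply, hv]
    rw [Matrix.mulVec_sub, Matrix.mulVec_single, Matrix.mulVec_single]
    funext m
    simp only [Pi.sub_apply, Pi.zero_apply, mul_one]
    simp only [Pi.smul_apply, MulOpposite.op_one, one_smul, Matrix.col_apply]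
    rw [hMdiff (e a) q (hβe a) hβq (heq a) m]
    ring
  -- linear independence
  have hli : LinearIndependent ℝ v := by
    rw [Fintype.linearIndependent_iff]
    intro g hg a
    have hpt := congrFun hg ((e a).castSucc)
    simp only [Finset.sum_apply, Pi.smul_apply, Pi.zero_apply, hv,
      Pi.sub_apply, smul_eq_mul] at hpt
    have hq0 : (Pi.single (M := fun _ : Fin (N + 1) => ℝ) (q.castSucc) 1)
        ((e a).castSucc) = 0 := by
      rw [Pi.single_apply, if_neg]
      exact fun h => heq a (Fin.castSucc_injective _ h)
    have hterm : ∀ b : Fin (n j - 1),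
        g b * ((Pi.single (M := fun _ : Fin (N + 1) => ℝ) ((e b).castSucc) 1
            ((e a).castSucc))
          - Pi.single (M := fun _ : Fin (N + 1) => ℝ) (q.castSucc) 1
            ((e a).castSucc))
        = if b = a then g b else 0 := by
      intro b
      rw [hq0]
      by_cases h : b = a
      · subst h; simp
      · have h2 : (Pi.single (M := fun _ : Fin (N + 1) => ℝ) ((e b).castSucc) 1)
            ((e a).castSucc) = 0 := by
          rw [Pi.single_apply, if_neg]
          exact fun h' => h (hei (Fin.castSucc_injective _ h')).symm
        rw [h2, if_neg h]
        ring
    rw [Finset.sum_congr rfl (fun b _ => hterm b)] at hpt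
    simpa using hpt
  -- conclude
  have hu : LinearIndependent ℝ
      (fun a => (⟨v a, hmem a⟩ : LinearMap.ker (Matrix.toLin' M))) :=
    LinearIndependent.of_comp (LinearMap.ker (Matrix.toLin' M)).subtype hli
  have hfin := hu.fintype_card_le_finrank
  simpa using hfin
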